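/- Define: a compact Hausdorff space X is weakly infinite-dimensional if for any sequence of pairs (Fᵢ, Hᵢ) of disjoint closed subsets of X there exist partitions Lᵢ between Fᵢ and Hᵢ with ⋂ᵢ Lᵢ = ∅. Theorem: if C(X; ℝ) has weakly infinite real rank, then X is weakly infinite-dimensional. -/

import Mathlib

/-- `L` is a partition between `F` and `H`: a closed set whose complement splits into
disjoint open sets containing `F` and `H` respectively. -/
def IsPartitionBetween {X : Type*} [TopologicalSpace X] (L F H : Set X) : Prop :=
  IsClosed L ∧ ∃ U V : Set X, IsOpen U ∧ IsOpen V ∧ U ∩ V = ∅ ∧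
    F ⊆ U ∧ H ⊆ V ∧ Lᶜ = U ∪ V

/-- A space is weakly infinite-dimensional if every sequence of pairs of disjoint
closed sets admits partitions with empty intersection. -/
def WeaklyInfiniteDimensional (X : Type*) [TopologicalSpace X] : Prop :=
  ∀ F H : ℕ → Set X,
    (∀ i, IsClosed (F i) ∧ IsClosed (H i) ∧ F i ∩ H i = ∅) →
    ∃ L : ℕ → Set X, (∀ i, IsPartitionBetween (L i) (F i) (H i)) ∧ (⋂ i, L i) = ∅

/-- `C(X, ℝ)` has weakly infinite real rank (self-adjointness is automatic). -/
def WeaklyInfiniteRealRankC (X : Type*) [TopologicalSpace X] [CompactSpace X] : Prop :=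
  ∀ f : ℕ → C(X, ℝ), ∀ ε : ℝ, 0 < ε →
    ∃ g : ℕ → C(X, ℝ), (∀ i, ‖f i - g i‖ < ε) ∧
      ∃ D : Finset ℕ, IsUnit (∑ i ∈ D, g i ^ 2)

theorem stmt_13 {X : Type*} [TopologicalSpace X] [CompactSpace X] [T2Space X]
    (h : WeaklyInfiniteRealRankC X) : WeaklyInfiniteDimensional X := by
  intro F H hFH
  -- Urysohn functions: f i = -1 on F i, f i = 1 on H i
  have hex : ∀ i, ∃ f : C(X, ℝ), (∀ x ∈ F i, f x = -1) ∧ (∀ x ∈ H i, f x = 1) := by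
    intro i
    obtain ⟨hFc, hHc, hdisj⟩ := hFH i
    obtain ⟨f, hf0, hf1, -⟩ := exists_continuous_zero_one_of_isClosed hFc hHc
      (Set.disjoint_iff_inter_eq_empty.mpr hdisj)
    refine ⟨(2 : ℝ) • f - 1, ?_, ?_⟩
    · intro x hx
      have : f x = 0 := hf0 hx
      simp [this]
    · intro x hx
      have : f x = 1 := hf1 hx
      simp [this]; norm_num
  choose f hfF hfH using hex
  obtain ⟨g, hg, D, hD⟩ := h f 1 one_pos
  -- pointwise bound
  have hpt : ∀ i x, |f i x - g i x| < 1 := fun i x =>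
    lt_of_le_of_lt ((f i - g i).norm_coe_le_norm x) (hg i)
  refine ⟨fun i => (g i) ⁻¹' {0}, fun i => ?_, ?_⟩
  · refine ⟨IsClosed.preimage (g i).continuous isClosed_singleton,
      {x | g i x < 0}, {x | 0 < g i x},
      isOpen_lt (g i).continuous continuous_const,
      isOpen_lt continuous_const (g i).continuous, ?_, ?_, ?_, ?_⟩
    · ext x; simp only [Set.mem_inter_iff, Set.mem_setOf_eq, Set.mem_empty_iff_false,
        iff_false, not_and]
      intro h1 h2; exact absurd (h1.trans h2) (lt_irrefl _)
    · intro x hx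
      have hb := hpt i x
      rw [hfF i x hx] at hb
      have := abs_lt.mp hb
      simp only [Set.mem_setOf_eq]; linarith [this.1, this.2]
    · intro x hx
      have hb := hpt i x
      rw [hfH i x hx] at hb
      have := abs_lt.mp hb
      simp only [Set.mem_setOf_eq]; linarith [this.1, this.2]
    · ext x
      simp only [Set.mem_compl_iff, Set.mem_preimage, Set.mem_singleton_iff,
        Set.mem_union, Set.mem_setOf_eq]
      constructor
      · intro hne; exact (lt_or_gt_of_ne hne).imp_left id
      · rintro (h1 | h1) he <;> simp [he] at h1
  · ext x
    simp only [Set.mem_iInter, Set.mem_preimage, Set.mem_singleton_iff,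
      Set.mem_empty_iff_false, iff_false]
    intro hall
    obtain ⟨w, hw⟩ := hD
    have h1 : (↑w * ↑w⁻¹ : C(X, ℝ)) x = 1 := by
      rw [w.mul_inv]; rfl
    have h2 : (↑w : C(X, ℝ)) x = 0 := by
      rw [hw]
      have : (∑ i ∈ D, g i ^ 2) x = ∑ i ∈ D, (g i x) ^ 2 := by
        simp
      rw [this]
      exact Finset.sum_eq_zero fun i _ => by rw [hall i]; ring
    rw [ContinuousMap.mul_apply, h2, zero_mul] at h1
    exact zero_ne_one h1
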